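/- Suppose q : ℝ≥0 → ℝ is differentiable and satisfies q'_t = λ - θ·(q_t - 1)⁺ - μ·(q_t ⊓ 1) with q_0 ≥ 0, where 0 < λ < μ and θ > 0 are constants. Then q_t converges to λ/μ as t → ∞. -/

import Mathlib

open Filter

/-- In the QD regime (`λ < μ`), the fluid limit converges to `λ/μ`. -/
theorem stmt_3 (lam μ θ : ℝ) (hlam : 0 < lam) (hlamμ : lam < μ) (hθ : 0 < θ)
    (q : ℝ → ℝ) (hq0 : 0 ≤ q 0)
    (hq : ∀ t : ℝ, 0 ≤ t →
      HasDerivAt q (lam - θ * max (q t - 1) 0 - μ * min (q t) 1) t) :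
    Tendsto q atTop (nhds (lam / μ)) := by
  have hμ : 0 < μ := hlam.trans hlamμ
  set a : ℝ := lam / μ with ha
  have hμa : μ * a = lam := by rw [ha]; field_simp
  have ha1 : a < 1 := (div_lt_one hμ).mpr hlamμ
  set c : ℝ := min μ θ with hcdef
  have hc : 0 < c := lt_min hμ hθ
  have hcμ : c ≤ μ := min_le_left _ _
  have hcθ : c ≤ θ := min_le_right _ _
  set K : ℝ := 2 * c with hK
  have hKpos : 0 < K := by positivity
  -- key inward drift inequality
  have key : ∀ x : ℝ, (x - a) * (lam - θ * max (x - 1) 0 - μ * min x 1)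
      ≤ -c * (x - a) ^ 2 := by
    intro x
    rcases le_or_gt x 1 with hx | hx
    · rw [max_eq_right (by linarith), min_eq_left hx]
      nlinarith [sq_nonneg (x - a)]
    · rw [max_eq_left (by linarith), min_eq_right hx.le]
      nlinarith [mul_nonneg (sub_nonneg.mpr hx.le) (sub_nonneg.mpr ha1.le),
        sq_nonneg (x - 1), sq_nonneg (1 - a)]
  set g : ℝ → ℝ := fun t => Real.exp (K * t) * (q t - a) ^ 2 with hg
  have hgderiv : ∀ t : ℝ, 0 ≤ t → HasDerivAt g
      (K * Real.exp (K * t) * (q t - a) ^ 2 +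
        Real.exp (K * t) *
          (2 * (q t - a) * (lam - θ * max (q t - 1) 0 - μ * min (q t) 1))) t := by
    intro t ht
    have he : HasDerivAt (fun s : ℝ => Real.exp (K * s)) (K * Real.exp (K * t)) t := by
      have := (Real.hasDerivAt_exp (K * t)).comp t ((hasDerivAt_id t).const_mul K)
      simpa [Function.comp_def, mul_comm] using this
    have hv : HasDerivAt (fun s => (q s - a) ^ 2)
        (2 * (q t - a) * (lam - θ * max (q t - 1) 0 - μ * min (q t) 1)) t := by
      have := ((hq t ht).sub_const a).fun_pow 2
      simpa [mul_comm, mul_assoc] using this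
    exact he.mul hv
  have hanti : AntitoneOn g (Set.Ici (0 : ℝ)) := by
    apply antitoneOn_of_deriv_nonpos (convex_Ici 0)
    · exact fun t ht => ((hgderiv t ht).continuousAt).continuousWithinAt
    · intro t ht
      rw [interior_Ici] at ht
      exact (hgderiv t (le_of_lt ht)).differentiableAt.differentiableWithinAt
    · intro t ht
      rw [interior_Ici] at ht
      rw [(hgderiv t ht.le).deriv]
      have hk := key (q t)
      have hexp := Real.exp_pos (K * t)
      have hprod := mul_le_mul_of_nonneg_left hk hexp.le
      simp only [hK]
      nlinarith [sq_nonneg (q t - a)]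
  have hbound : ∀ t : ℝ, 0 ≤ t →
      (q t - a) ^ 2 ≤ (q 0 - a) ^ 2 * Real.exp (-(K * t)) := by
    intro t ht
    have h1 : Real.exp (K * t) * (q t - a) ^ 2 ≤ (q 0 - a) ^ 2 := by
      have := hanti (Set.self_mem_Ici) ht ht
      simpa [g] using this
    have hp := Real.exp_pos (K * t)
    rw [Real.exp_neg, ← div_eq_mul_inv, le_div_iff₀ hp, mul_comm]
    exact h1
  have hupper : Tendsto (fun t => (q 0 - a) ^ 2 * Real.exp (-(K * t))) atTop (nhds 0) := by
    have h1 : Tendsto (fun t : ℝ => K * t) atTop atTop :=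
      Tendsto.const_mul_atTop hKpos tendsto_id
    have h2 : Tendsto (fun t : ℝ => Real.exp (-(K * t))) atTop (nhds 0) := by
      have := Real.tendsto_exp_neg_atTop_nhds_zero.comp h1
      simpa [Function.comp_def] using this
    simpa using h2.const_mul ((q 0 - a) ^ 2)
  have hsq : Tendsto (fun t => (q t - a) ^ 2) atTop (nhds 0) := by
    apply tendsto_of_tendsto_of_tendsto_of_le_of_le' tendsto_const_nhds hupper
    · exact Eventually.of_forall fun t => sq_nonneg _
    · filter_upwards [eventually_ge_atTop (0 : ℝ)] with t ht using hbound t ht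
  have habs : Tendsto (fun t => |q t - a|) atTop (nhds 0) := by
    have := (Real.continuous_sqrt.tendsto 0).comp hsq
    simpa [Function.comp_def, Real.sqrt_sq_eq_abs] using this
  have hsub : Tendsto (fun t => q t - a) atTop (nhds 0) := by
    rw [tendsto_zero_iff_norm_tendsto_zero]
    simpa [Real.norm_eq_abs] using habs
  have := hsub.add (tendsto_const_nhds (x := a))
  simpa using this
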